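/- Let S ≥ 1, P ∈ {1,...,S}, σ ≥ 0, ξ ≥ 0, and let u, v ∈ (ℝ⁺)^S be nondecreasingly sorted vectors with u ≺_P v. Then for every ℓ ∈ {P,...,S}, G(u)(ℓ) ≤ G̃^P(v)(ℓ), where G(u) = sort([u + σ·e₁ − ξ·1]⁺) and G̃^P(v) = sort([v + σ·e_P − ξ·1]⁺). -/
import Mathlib


open Finset

/-- The nondecreasing rearrangement of a finite real vector. -/
noncomputable def sortVec {S : ℕ} (u : Fin S → ℝ) : Fin S → ℝ := u ∘ Tuple.sort u

/-- The Schur-convex semi-ordering `≺_c` : equal total sums, and each tail sum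
(from the second coordinate on) of the sorted version of `u` is dominated by that of `v`. -/
def schurLE {S : ℕ} (u v : Fin S → ℝ) : Prop :=
  (∑ i, u i = ∑ i, v i) ∧
  ∀ k : Fin S, 1 ≤ (k : ℕ) →
    ∑ i ∈ Finset.Ici k, sortVec u i ≤ ∑ i ∈ Finset.Ici k, sortVec v i

/-- The semi-ordering `≺_*` : every tail sum of `u` is dominated by that of `v`. -/
def starLE {S : ℕ} (u v : Fin S → ℝ) : Prop :=
  ∀ k : Fin S, ∑ i ∈ Finset.Ici k, u i ≤ ∑ i ∈ Finset.Ici k, v i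

/-- The semi-ordering `≺_P` : `u ≺_* v` and `u(ℓ) ≤ v(ℓ)` for every `ℓ ≥ P`. -/
def precP {S : ℕ} (P : Fin S) (u v : Fin S → ℝ) : Prop :=
  starLE u v ∧ ∀ ℓ : Fin S, P ≤ ℓ → u ℓ ≤ v ℓ

/-- The map `G̃^P : u ↦ sort([u + σ·e_P − ξ·1]⁺)`.  For `P` the first index,
this is the Kiefer–Wolfowitz map `G`. -/
noncomputable def GP {S : ℕ} (σ ξ : ℝ) (P : Fin S) (u : Fin S → ℝ) : Fin S → ℝ :=
  sortVec (fun i => max (u i + (if i = P then σ else 0) - ξ) 0)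

lemma card_filter_perm {S : ℕ} (π : Equiv.Perm (Fin S)) (p : Fin S → Prop) [DecidablePred p] :
    (Finset.univ.filter fun i => p (π i)).card = (Finset.univ.filter p).card := by
  apply Finset.card_bij (fun i _ => π i)
  · intro a ha; simp only [Finset.mem_filter, Finset.mem_univ, true_and] at ha ⊢; exact ha
  · intro a _ b _ h; exact π.injective h
  · intro b hb
    refine ⟨π.symm b, ?_, by simp⟩
    simp only [Finset.mem_filter, Finset.mem_univ, true_and] at hb ⊢
    simpa using hb

lemma sortVec_le_of_card {S : ℕ} (w : Fin S → ℝ) (ℓ : Fin S) (c : ℝ)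
    (h : (ℓ : ℕ) + 1 ≤ (Finset.univ.filter fun i => w i ≤ c).card) :
    sortVec w ℓ ≤ c := by
  by_contra hc
  push_neg at hc
  have hmono : Monotone (sortVec w) := Tuple.monotone_sort w
  have hcard : (Finset.univ.filter fun i => sortVec w i ≤ c).card
      = (Finset.univ.filter fun i => w i ≤ c).card :=
    card_filter_perm (Tuple.sort w) (fun i => w i ≤ c)
  have hsub : (Finset.univ.filter fun i => sortVec w i ≤ c) ⊆ Finset.Iio ℓ := by
    intro i hi
    simp only [Finset.mem_filter, Finset.mem_univ, true_and] at hi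
    rw [Finset.mem_Iio]
    by_contra hli
    exact absurd (hmono (le_of_not_gt hli)) (not_le.2 (lt_of_le_of_lt hi hc))
  have := (Finset.card_le_card hsub).trans_eq (Fin.card_Iio ℓ)
  omega

lemma le_sortVec_of_card {S : ℕ} (w : Fin S → ℝ) (ℓ : Fin S) (c : ℝ)
    (h : S - (ℓ : ℕ) ≤ (Finset.univ.filter fun i => c ≤ w i).card) :
    c ≤ sortVec w ℓ := by
  by_contra hc
  push_neg at hc
  have hmono : Monotone (sortVec w) := Tuple.monotone_sort w
  have hcard : (Finset.univ.filter fun i => c ≤ sortVec w i).card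
      = (Finset.univ.filter fun i => c ≤ w i).card :=
    card_filter_perm (Tuple.sort w) (fun i => c ≤ w i)
  have hsub : (Finset.univ.filter fun i => c ≤ sortVec w i) ⊆ Finset.Ioi ℓ := by
    intro i hi
    simp only [Finset.mem_filter, Finset.mem_univ, true_and] at hi
    rw [Finset.mem_Ioi]
    by_contra hli
    exact absurd ((hmono (le_of_not_gt hli)).trans_lt hc) (not_lt.2 hi)
  have := (Finset.card_le_card hsub).trans_eq (Fin.card_Ioi ℓ)
  have hℓ : (ℓ : ℕ) < S := ℓ.isLt
  omega

/-- if `u ≺_P v` then `G(u)(ℓ) ≤ G̃^P(v)(ℓ)` for every `ℓ ≥ P`. -/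
theorem G_le_GP_of_ge {S : ℕ} (hS : 0 < S) (P : Fin S) (σ ξ : ℝ)
    (hσ : 0 ≤ σ) (hξ : 0 ≤ ξ)
    (u v : Fin S → ℝ)
    (hu : Monotone u) (hv : Monotone v)
    (hu0 : ∀ i, 0 ≤ u i) (hv0 : ∀ i, 0 ≤ v i)
    (huv : precP P u v) :
    ∀ ℓ : Fin S, P ≤ ℓ → GP σ ξ ⟨0, hS⟩ u ℓ ≤ GP σ ξ P v ℓ := by
  intro ℓ hPℓ
  set z : Fin S := ⟨0, hS⟩ with hz
  set a : Fin S → ℝ := fun i => max (u i + (if i = z then σ else 0) - ξ) 0 with ha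
  set b : Fin S → ℝ := fun i => max (v i + (if i = P then σ else 0) - ξ) 0 with hb
  have hzle : ∀ i : Fin S, z ≤ i := fun i => by
    simp [hz, Fin.le_def]
  set c : ℝ := sortVec b ℓ with hc
  show sortVec a ℓ ≤ c
  -- Step 2 : max (v ℓ - ξ) 0 ≤ c
  have hm : max (v ℓ - ξ) 0 ≤ c := by
    apply le_sortVec_of_card
    have hsub : Finset.Ici ℓ ⊆ Finset.univ.filter fun i => max (v ℓ - ξ) 0 ≤ b i := by
      intro i hi
      rw [Finset.mem_Ici] at hi
      simp only [Finset.mem_filter, Finset.mem_univ, true_and, hb]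
      rcases eq_or_ne i P with hiP | hiP
      · have hℓi : i = ℓ := le_antisymm (hiP ▸ hPℓ) hi
        rw [if_pos hiP, hℓi]
        exact max_le_max (by linarith) le_rfl
      · simp only [if_neg hiP, add_zero]
        exact max_le_max (by linarith [hv hi]) le_rfl
    calc S - (ℓ : ℕ) = (Finset.Ici ℓ).card := (Fin.card_Ici ℓ).symm
      _ ≤ _ := Finset.card_le_card hsub
  -- Step 1 : get j ∈ {P} ∪ Ioi ℓ with b j ≤ c
  have hstep1 : ∃ j : Fin S, (j = P ∨ ℓ < j) ∧ b j ≤ c := by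
    set B : Finset (Fin S) := insert P (Finset.Ioi ℓ) with hB
    have hPB : P ∈ B := Finset.mem_insert_self _ _
    obtain ⟨j, hjB, hjmin⟩ := Finset.exists_min_image B b ⟨P, hPB⟩
    have hjc : b j ≤ c := by
      apply le_sortVec_of_card
      have hsub : B ⊆ Finset.univ.filter fun i => b j ≤ b i := by
        intro i hi
        simp only [Finset.mem_filter, Finset.mem_univ, true_and]
        exact hjmin i hi
      have hcardB : B.card = S - (ℓ : ℕ) := by
        rw [hB, Finset.card_insert_of_notMem (by simp [Finset.mem_Ioi, not_lt, hPℓ]),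
          Fin.card_Ioi]
        have := ℓ.isLt
        omega
      calc S - (ℓ : ℕ) = B.card := hcardB.symm
        _ ≤ _ := Finset.card_le_card hsub
    refine ⟨j, ?_, hjc⟩
    rw [hB, Finset.mem_insert, Finset.mem_Ioi] at hjB
    exact hjB
  obtain ⟨j, hj, hjc⟩ := hstep1
  -- Step 3 : build the set A of ℓ+1 indices with a i ≤ c
  have hk : ∃ k : Fin S, k ∉ Finset.Ioc z ℓ ∧ a k ≤ c := by
    rcases hj with hjP | hjℓ
    · refine ⟨z, by simp, ?_⟩
      have h1 : u z ≤ v P := le_trans (hu (hzle P)) (huv.2 P le_rfl)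
      calc a z = max (u z + σ - ξ) 0 := by simp [ha]
        _ ≤ max (v P + σ - ξ) 0 := max_le_max (by linarith) le_rfl
        _ = b P := by simp [hb]
        _ ≤ c := hjP ▸ hjc
    · refine ⟨j, by simp [Finset.mem_Ioc, not_and_or, not_le.2 hjℓ], ?_⟩
      have hjz : j ≠ z := by
        intro h
        exact absurd (h ▸ hzle ℓ) (not_le.2 hjℓ)
      have hjP : j ≠ P := ne_of_gt (lt_of_le_of_lt hPℓ hjℓ)
      have h1 : u j ≤ v j := huv.2 j (hPℓ.trans hjℓ.le)
      calc a j = max (u j - ξ) 0 := by simp [ha, hjz]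
        _ ≤ max (v j - ξ) 0 := max_le_max (by linarith) le_rfl
        _ = b j := by simp [hb, hjP]
        _ ≤ c := hjc
  obtain ⟨k, hkA, hkc⟩ := hk
  apply sortVec_le_of_card
  have hsub : insert k (Finset.Ioc z ℓ) ⊆ Finset.univ.filter fun i => a i ≤ c := by
    intro i hi
    simp only [Finset.mem_filter, Finset.mem_univ, true_and]
    rw [Finset.mem_insert] at hi
    rcases hi with rfl | hi
    · exact hkc
    · rw [Finset.mem_Ioc] at hi
      have hiz : i ≠ z := by
        intro h
        exact absurd (h ▸ hi.1) (lt_irrefl z)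
      have h1 : u i ≤ u ℓ := hu hi.2
      have h2 : u ℓ ≤ v ℓ := huv.2 ℓ hPℓ
      calc a i = max (u i - ξ) 0 := by simp [ha, hiz]
        _ ≤ max (v ℓ - ξ) 0 := max_le_max (by linarith) le_rfl
        _ ≤ c := hm
  have hcardA : (insert k (Finset.Ioc z ℓ)).card = (ℓ : ℕ) + 1 := by
    rw [Finset.card_insert_of_notMem hkA, Fin.card_Ioc]
    simp [hz]
  calc (ℓ : ℕ) + 1 = (insert k (Finset.Ioc z ℓ)).card := hcardA.symm
    _ ≤ _ := Finset.card_le_card hsub
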